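/- Let μ, ν, ρ be probability measures on a measurable space X. Then (1/2)‖μ − ν‖_TV = (1/2)‖μ − ρ‖_TV + (1/2)‖ρ − ν‖_TV if and only if there exists a measurable set E such that μ(A) ≤ ρ(A) ≤ ν(A) for all measurable A ⊆ E and ν(A') ≤ ρ(A') ≤ μ(A') for all measurable A' ⊆ Eᶜ. -/

import Mathlib

open MeasureTheory

open Set VectorMeasure in
/-- A Hahn positive set maximizes a signed measure. -/
private lemma hahn_max {X : Type*} [MeasurableSpace X] (s : SignedMeasure X) {i : Set X}
    (hi : MeasurableSet i) (h1 : 0 ≤[i] s) (h2 : s ≤[iᶜ] 0) {A : Set X}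
    (hA : MeasurableSet A) : s A ≤ s i := by
  have hAi : s (A ∩ iᶜ) ≤ 0 :=
    (restrict_le_restrict_iff _ _ hi.compl).1 h2 (hA.inter hi.compl) inter_subset_right
  have hiA : (0 : ℝ) ≤ s (i \ A) :=
    (restrict_le_restrict_iff _ _ hi).1 h1 (hi.diff hA) diff_subset
  have hA' : s A = s (A ∩ i) + s (A ∩ iᶜ) := by
    rw [← s.of_union (Disjoint.mono inter_subset_right inter_subset_right disjoint_compl_right)
      (hA.inter hi) (hA.inter hi.compl), Set.inter_union_compl]
  have hi' : s i = s (A ∩ i) + s (i \ A) := by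
    rw [← s.of_union (Disjoint.mono_left inter_subset_left disjoint_sdiff_self_right)
      (hA.inter hi) (hi.diff hA), Set.inter_comm, Set.inter_union_diff]
  linarith

open Set VectorMeasure in
/-- TV/2 of a difference of probability measures equals its value on any Hahn positive set. -/
private lemma tv_half {X : Type*} [MeasurableSpace X] (μ ν : Measure X)
    [IsProbabilityMeasure μ] [IsProbabilityMeasure ν] {j : Set X} (hj : MeasurableSet j)
    (h1 : 0 ≤[j] (μ.toSignedMeasure - ν.toSignedMeasure))
    (h2 : (μ.toSignedMeasure - ν.toSignedMeasure) ≤[jᶜ] 0) :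
    (μ.toSignedMeasure - ν.toSignedMeasure).totalVariation Set.univ / 2 =
      ENNReal.ofReal ((μ.toSignedMeasure - ν.toSignedMeasure) j) := by
  set s := μ.toSignedMeasure - ν.toSignedMeasure with hs
  obtain ⟨i, hi₁, hi₂, hi₃, hp, hn⟩ := s.toJordanDecomposition_spec
  have hsuniv : s univ = 0 := by
    rw [hs, Measure.toSignedMeasure_sub_apply MeasurableSet.univ]
    simp
  have hcompl : s iᶜ = -(s i) := by
    have := s.of_union disjoint_compl_right hi₁ hi₁.compl
    rw [Set.union_compl_self, hsuniv] at this
    linarith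
  have hnonneg : (0 : ℝ) ≤ s i := nonneg_of_zero_le_restrict s hi₂
  have hij : s i = s j := le_antisymm (hahn_max s hj h1 h2 hi₁) (hahn_max s hi₁ hi₂ hi₃ hj)
  have htv : s.totalVariation Set.univ = 2 * ENNReal.ofReal (s i) := by
    have cmk : ∀ (x : ℝ) (hx : 0 ≤ x), ENNReal.ofNNReal (NNReal.mk x hx) = ENNReal.ofReal x :=
      fun x hx => by rw [ENNReal.ofReal, Real.toNNReal_of_nonneg hx]
    rw [SignedMeasure.totalVariation, Measure.add_apply, hp, hn,
      SignedMeasure.toMeasureOfZeroLE_apply _ hi₂ hi₁ MeasurableSet.univ,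
      SignedMeasure.toMeasureOfLEZero_apply _ hi₃ hi₁.compl MeasurableSet.univ,
      cmk, cmk, Set.inter_univ, Set.inter_univ, hcompl, neg_neg, two_mul]
  rw [htv, ← hij, mul_comm, mul_div_assoc, ENNReal.div_self (by norm_num) (by norm_num), mul_one]

/-- Equality in the triangle inequality for total variation is characterized by the
existence of a common ordering set `E`. -/
theorem stmt_3 {X : Type*} [MeasurableSpace X]
    (μ ν ρ : Measure X) [IsProbabilityMeasure μ] [IsProbabilityMeasure ν]
    [IsProbabilityMeasure ρ] :
    (μ.toSignedMeasure - ν.toSignedMeasure).totalVariation Set.univ / 2 =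
        (μ.toSignedMeasure - ρ.toSignedMeasure).totalVariation Set.univ / 2 +
          (ρ.toSignedMeasure - ν.toSignedMeasure).totalVariation Set.univ / 2 ↔
      ∃ E : Set X, MeasurableSet E ∧
        (∀ A : Set X, MeasurableSet A → A ⊆ E → μ A ≤ ρ A ∧ ρ A ≤ ν A) ∧
        (∀ A' : Set X, MeasurableSet A' → A' ⊆ Eᶜ → ν A' ≤ ρ A' ∧ ρ A' ≤ μ A') := by
  classical
  set s := μ.toSignedMeasure - ν.toSignedMeasure with hs
  set s₁ := μ.toSignedMeasure - ρ.toSignedMeasure with hs1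
  set s₂ := ρ.toSignedMeasure - ν.toSignedMeasure with hs2
  have hsum : ∀ (A : Set X), s A = s₁ A + s₂ A := by
    intro A
    have : s = s₁ + s₂ := by rw [hs, hs1, hs2]; abel
    rw [this, VectorMeasure.add_apply]
  have happly : ∀ (a b : Measure X) [IsProbabilityMeasure a] [IsProbabilityMeasure b]
      {A : Set X}, MeasurableSet A →
      (a.toSignedMeasure - b.toSignedMeasure) A = (a A).toReal - (b A).toReal := by
    intro a b _ _ A hA
    exact Measure.toSignedMeasure_sub_apply hA
  have hmle : ∀ (a b : Measure X) [IsProbabilityMeasure a] [IsProbabilityMeasure b]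
      {A : Set X}, (a A).toReal ≤ (b A).toReal → a A ≤ b A := by
    intro a b _ _ A h
    exact (ENNReal.toReal_le_toReal (measure_ne_top a A) (measure_ne_top b A)).mp h
  constructor
  · intro h
    obtain ⟨i, hi₁, hi₂, hi₃⟩ := s.exists_compl_positive_negative
    obtain ⟨j₁, hj₁₁, hj₁₂, hj₁₃⟩ := s₁.exists_compl_positive_negative
    obtain ⟨j₂, hj₂₁, hj₂₂, hj₂₃⟩ := s₂.exists_compl_positive_negative
    rw [tv_half μ ν hi₁ hi₂ hi₃, tv_half μ ρ hj₁₁ hj₁₂ hj₁₃,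
      tv_half ρ ν hj₂₁ hj₂₂ hj₂₃] at h
    have n0 : (0 : ℝ) ≤ s i := VectorMeasure.nonneg_of_zero_le_restrict s hi₂
    have n1 : (0 : ℝ) ≤ s₁ j₁ := VectorMeasure.nonneg_of_zero_le_restrict s₁ hj₁₂
    have n2 : (0 : ℝ) ≤ s₂ j₂ := VectorMeasure.nonneg_of_zero_le_restrict s₂ hj₂₂
    rw [← ENNReal.ofReal_add n1 n2, ENNReal.ofReal_eq_ofReal_iff n0 (add_nonneg n1 n2)] at h
    have hle1 : s₁ i ≤ s₁ j₁ := hahn_max s₁ hj₁₁ hj₁₂ hj₁₃ hi₁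
    have hle2 : s₂ i ≤ s₂ j₂ := hahn_max s₂ hj₂₁ hj₂₂ hj₂₃ hi₁
    have hsi : s i = s₁ i + s₂ i := hsum i
    have e1 : s₁ i = s₁ j₁ := by linarith
    have e2 : s₂ i = s₂ j₂ := by linarith
    refine ⟨iᶜ, hi₁.compl, ?_, ?_⟩
    · intro A hA hAsub
      have hdisj : Disjoint i A :=
        Set.disjoint_left.mpr fun x hx hxA => (hAsub hxA) hx
      have hmax1 : s₁ (i ∪ A) ≤ s₁ j₁ := hahn_max s₁ hj₁₁ hj₁₂ hj₁₃ (hi₁.union hA)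
      have hmax2 : s₂ (i ∪ A) ≤ s₂ j₂ := hahn_max s₂ hj₂₁ hj₂₂ hj₂₃ (hi₁.union hA)
      have hu1 : s₁ (i ∪ A) = s₁ i + s₁ A := s₁.of_union hdisj hi₁ hA
      have hu2 : s₂ (i ∪ A) = s₂ i + s₂ A := s₂.of_union hdisj hi₁ hA
      have hA1 : s₁ A ≤ 0 := by linarith
      have hA2 : s₂ A ≤ 0 := by linarith
      rw [happly μ ρ hA] at hA1
      rw [happly ρ ν hA] at hA2
      exact ⟨hmle μ ρ (by linarith), hmle ρ ν (by linarith)⟩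
    · intro A hA hAsub
      rw [compl_compl] at hAsub
      have hu : i = A ∪ (i \ A) := by rw [Set.union_diff_cancel hAsub]
      have hd1 : s₁ i = s₁ A + s₁ (i \ A) := by
        conv_lhs => rw [hu]
        exact s₁.of_union disjoint_sdiff_self_right hA (hi₁.diff hA)
      have hd2 : s₂ i = s₂ A + s₂ (i \ A) := by
        conv_lhs => rw [hu]
        exact s₂.of_union disjoint_sdiff_self_right hA (hi₁.diff hA)
      have hm1 : s₁ (i \ A) ≤ s₁ j₁ := hahn_max s₁ hj₁₁ hj₁₂ hj₁₃ (hi₁.diff hA)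
      have hm2 : s₂ (i \ A) ≤ s₂ j₂ := hahn_max s₂ hj₂₁ hj₂₂ hj₂₃ (hi₁.diff hA)
      have hA1 : 0 ≤ s₁ A := by linarith
      have hA2 : 0 ≤ s₂ A := by linarith
      rw [happly μ ρ hA] at hA1
      rw [happly ρ ν hA] at hA2
      exact ⟨hmle ν ρ (by linarith), hmle ρ μ (by linarith)⟩
  · rintro ⟨E, hE, h1, h2⟩
    have hps : ∀ (a b : Measure X) [IsProbabilityMeasure a] [IsProbabilityMeasure b],
        (∀ A : Set X, MeasurableSet A → A ⊆ Eᶜ → b A ≤ a A) →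
        0 ≤[Eᶜ] (a.toSignedMeasure - b.toSignedMeasure) := by
      intro a b _ _ hba
      rw [VectorMeasure.restrict_le_restrict_iff _ _ hE.compl]
      intro A hA hAsub
      rw [VectorMeasure.zero_apply, happly a b hA]
      have := (ENNReal.toReal_le_toReal (measure_ne_top b A) (measure_ne_top a A)).mpr
        (hba A hA hAsub)
      linarith
    have hns : ∀ (a b : Measure X) [IsProbabilityMeasure a] [IsProbabilityMeasure b],
        (∀ A : Set X, MeasurableSet A → A ⊆ E → a A ≤ b A) →
        (a.toSignedMeasure - b.toSignedMeasure) ≤[Eᶜᶜ] 0 := by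
      intro a b _ _ hab
      rw [compl_compl, VectorMeasure.restrict_le_restrict_iff _ _ hE]
      intro A hA hAsub
      rw [VectorMeasure.zero_apply, happly a b hA]
      have := (ENNReal.toReal_le_toReal (measure_ne_top a A) (measure_ne_top b A)).mpr
        (hab A hA hAsub)
      linarith
    have pos0 : 0 ≤[Eᶜ] s := hps μ ν fun A hA hsub =>
      le_trans (h2 A hA hsub).1 (h2 A hA hsub).2
    have neg0 : s ≤[Eᶜᶜ] 0 := hns μ ν fun A hA hsub =>
      le_trans (h1 A hA hsub).1 (h1 A hA hsub).2
    have pos1 : 0 ≤[Eᶜ] s₁ := hps μ ρ fun A hA hsub => (h2 A hA hsub).2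
    have neg1 : s₁ ≤[Eᶜᶜ] 0 := hns μ ρ fun A hA hsub => (h1 A hA hsub).1
    have pos2 : 0 ≤[Eᶜ] s₂ := hps ρ ν fun A hA hsub => (h2 A hA hsub).1
    have neg2 : s₂ ≤[Eᶜᶜ] 0 := hns ρ ν fun A hA hsub => (h1 A hA hsub).2
    rw [tv_half μ ν hE.compl pos0 neg0, tv_half μ ρ hE.compl pos1 neg1,
      tv_half ρ ν hE.compl pos2 neg2,
      ← ENNReal.ofReal_add (VectorMeasure.nonneg_of_zero_le_restrict s₁ pos1)
        (VectorMeasure.nonneg_of_zero_le_restrict s₂ pos2)]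
    rw [hsum Eᶜ]
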